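/- With the setup of the loop algebra polarization: for U = zⁿ a and V̄ = z^{-p} b (a, b ∈ g, n, p ∈ ℤ with n, p > 0), the operator (ad_{V̄})₊₋ (ad_U)₋₊ - (ad_U)₊₋ (ad_{V̄})₋₊ on H₊ is trace class, and its trace equals 0 if n ≠ p, while for n = p it equals -n · tr_g(c ↦ [a,[b,c]]) = n ⟨a, b⟩, where ⟨·,·⟩ is minus the Killing form. -/

import Mathlib

/-- The operator `ad_{zⁿ a}` on (finitely supported) Fourier modes of the loop algebra:
it maps `c z^q` to `⁅a, c⁆ z^{q+n}`. -/
noncomputable def shiftAd {g : Type*} [LieRing g] [LieAlgebra ℝ g]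
    (n : ℤ) (a : g) : (ℤ →₀ g) →ₗ[ℝ] (ℤ →₀ g) :=
  (Finsupp.lmapDomain g ℝ (fun q => q + n)) ∘ₗ
    (Finsupp.mapRange.linearMap (LieAlgebra.ad ℝ g a))

/-- Projection onto nonnegative Fourier modes `H₊`. -/
noncomputable def projPos {g : Type*} [LieRing g] [LieAlgebra ℝ g] :
    (ℤ →₀ g) →ₗ[ℝ] (ℤ →₀ g) :=
  Finsupp.lsum ℝ (fun q : ℤ =>
    if 0 ≤ q then (Finsupp.lsingle q : g →ₗ[ℝ] (ℤ →₀ g)) else 0)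

/-- Projection onto negative Fourier modes `H₋`. -/
noncomputable def projNeg {g : Type*} [LieRing g] [LieAlgebra ℝ g] :
    (ℤ →₀ g) →ₗ[ℝ] (ℤ →₀ g) :=
  Finsupp.lsum ℝ (fun q : ℤ =>
    if q < 0 then (Finsupp.lsingle q : g →ₗ[ℝ] (ℤ →₀ g)) else 0)

/-- For `U = zⁿ a` and `V̄ = z^{-p} b` (`n, p > 0`) in the loop algebra of a compact
semisimple `g` (inner product `Φ(a,b) = -tr(ad_a ad_b)`, orthonormal basis `(c i)`), the
operator `(ad_V̄)₊₋(ad_U)₋₊ - (ad_U)₊₋(ad_V̄)₋₊` on `H₊` is trace class (its diagonal is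
summable); its trace is `0` if `n ≠ p`, and for `n = p` it equals
`-n·tr_g(c ↦ ⁅a,⁅b,c⁆⁆) = n Φ(a,b)`. -/
theorem stmt_13 (g : Type*) [LieRing g] [LieAlgebra ℝ g] [FiniteDimensional ℝ g]
    (Φ : g →ₗ[ℝ] g →ₗ[ℝ] ℝ)
    (hsymm : ∀ x y : g, Φ x y = Φ y x)
    (hposdef : ∀ x : g, x ≠ 0 → 0 < Φ x x)
    (hK : ∀ x y : g, Φ x y
      = - LinearMap.trace ℝ g (LinearMap.comp (LieAlgebra.ad ℝ g x) (LieAlgebra.ad ℝ g y)))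
    {ι : Type*} [Fintype ι] [DecidableEq ι] (c : Module.Basis ι ℝ g)
    (hortho : ∀ i j, Φ (c i) (c j) = if i = j then 1 else 0)
    (a b : g) (n p : ℤ) (hn : 0 < n) (hp : 0 < p) :
    let T : (ℤ →₀ g) →ₗ[ℝ] (ℤ →₀ g) :=
      projPos ∘ₗ shiftAd (-p) b ∘ₗ projNeg ∘ₗ shiftAd n a ∘ₗ projPos
        - projPos ∘ₗ shiftAd n a ∘ₗ projNeg ∘ₗ shiftAd (-p) b ∘ₗ projPos
    let diag : ℤ → ℝ := fun q => ∑ i, Φ (c i) ((T (Finsupp.single q (c i))) q)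
    Summable diag ∧
    (n ≠ p → ∑' q : ℤ, diag q = 0) ∧
    (n = p →
      (∑' q : ℤ, diag q) = (n : ℝ) * Φ a b ∧
      (∑' q : ℤ, diag q) = -(n : ℝ) * LinearMap.trace ℝ g
          (LinearMap.comp (LieAlgebra.ad ℝ g a) (LieAlgebra.ad ℝ g b))) := by
  intro T diag
  have hshift : ∀ (m : ℤ) (x : g) (q : ℤ) (v : g),
      shiftAd m x (Finsupp.single q v) = Finsupp.single (q + m) ⁅x, v⁆ := by
    intro m x q v; simp [shiftAd, Finsupp.mapDomain_single]
  have hpos : ∀ (q : ℤ) (v : g),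
      projPos (Finsupp.single q v) = if 0 ≤ q then Finsupp.single q v else 0 := by
    intro q v; simp only [projPos, Finsupp.lsum_single]; split_ifs <;> simp
  have hneg : ∀ (q : ℤ) (v : g),
      projNeg (Finsupp.single q v) = if q < 0 then Finsupp.single q v else 0 := by
    intro q v; simp only [projNeg, Finsupp.lsum_single]; split_ifs <;> simp
  -- key computation of T on single q v
  have hT : ∀ (q : ℤ) (v : g), T (Finsupp.single q v) =
      -(if 0 ≤ q ∧ q + -p < 0 ∧ 0 ≤ q + -p + n
        then Finsupp.single (q + -p + n) ⁅a, ⁅b, v⁆⁆ else 0) := by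
    intro q v
    simp only [T, LinearMap.sub_apply, LinearMap.comp_apply]
    by_cases h0 : 0 ≤ q
    · rw [hpos q v, if_pos h0]
      simp only [hshift]
      rw [hneg, hneg, if_neg (by omega : ¬ q + n < 0)]
      simp only [map_zero, zero_sub]
      by_cases h1 : q + -p < 0
      · rw [if_pos h1, hshift, hpos]
        by_cases h2 : 0 ≤ q + -p + n
        · rw [if_pos h2, if_pos ⟨h0, h1, h2⟩]
        · rw [if_neg h2, if_neg (by tauto), neg_zero]
      · rw [if_neg h1]
        simp only [map_zero, neg_zero]
        rw [if_neg (by tauto), neg_zero]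
    · rw [hpos q v, if_neg h0]
      simp only [map_zero, sub_zero, neg_zero]
      rw [if_neg (by tauto), neg_zero]
  have hPhi : ∀ (i : ι) (v : g), Φ (c i) v = c.repr v i := by
    intro i v
    conv_lhs => rw [← c.sum_repr v]
    simp only [map_sum, map_smul, hortho, smul_eq_mul, mul_ite, mul_one, mul_zero]
    rw [Finset.sum_ite_eq Finset.univ i fun j => c.repr v j]
    simp
  have htr : ∀ (M : g →ₗ[ℝ] g), (∑ i, Φ (c i) (M (c i))) = LinearMap.trace ℝ g M := by
    intro M
    rw [LinearMap.trace_eq_matrix_trace ℝ c, Matrix.trace]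
    simp [hPhi, LinearMap.toMatrix_apply, Matrix.diag]
  set tr : ℝ := LinearMap.trace ℝ g
      (LinearMap.comp (LieAlgebra.ad ℝ g a) (LieAlgebra.ad ℝ g b)) with htrdef
  have hdiag : ∀ q : ℤ, diag q = if 0 ≤ q ∧ q < p ∧ n = p then -tr else 0 := by
    intro q
    have : ∀ i : ι, (T (Finsupp.single q (c i))) q
        = if 0 ≤ q ∧ q < p ∧ n = p then -⁅a, ⁅b, c i⁆⁆ else 0 := by
      intro i
      rw [hT]
      simp only [Finsupp.coe_neg, Pi.neg_apply]
      rw [apply_ite (fun f : ℤ →₀ g => f q)]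
      simp only [Finsupp.single_apply, Finsupp.coe_zero, Pi.zero_apply]
      split_ifs with h1 h2 h3 h4 <;> first | rfl | omega | (exfalso; omega) | simp | (exfalso; exact h1 ⟨by omega, by omega, by omega⟩)
    simp only [diag, this]
    split_ifs with h
    · rw [htrdef, ← htr ((LieAlgebra.ad ℝ g a).comp (LieAlgebra.ad ℝ g b))]
      simp only [LinearMap.comp_apply, LieAlgebra.ad_apply, map_neg,
        Finset.sum_neg_distrib]
    · simp
  have hsupp : ∀ q : ℤ, q ∉ Finset.Ico (0 : ℤ) p → diag q = 0 := by
    intro q hq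
    rw [hdiag, if_neg]
    simp only [Finset.mem_Ico, not_and_or, not_le, not_lt] at hq
    rintro ⟨h1, h2, h3⟩; omega
  have hsum : Summable diag := summable_of_ne_finset_zero hsupp
  have htsum : ∑' q : ℤ, diag q = ∑ q ∈ Finset.Ico (0 : ℤ) p, diag q :=
    tsum_eq_sum hsupp
  refine ⟨hsum, ?_, ?_⟩
  · intro hne
    rw [htsum]
    apply Finset.sum_eq_zero
    intro q hq
    rw [hdiag, if_neg]; tauto
  · intro heq
    subst heq
    have hval : ∑' q : ℤ, diag q = -(n : ℝ) * tr := by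
      rw [htsum]
      have : ∀ q ∈ Finset.Ico (0 : ℤ) n, diag q = -tr := by
        intro q hq
        simp only [Finset.mem_Ico] at hq
        rw [hdiag, if_pos ⟨hq.1, hq.2, rfl⟩]
      rw [Finset.sum_congr rfl this, Finset.sum_const, Int.card_Ico]
      simp only [nsmul_eq_mul]
      rw [show ((n - 0).toNat : ℝ) = (n : ℝ) by
        rw [← Int.cast_natCast, Int.toNat_of_nonneg (by omega)]; push_cast; ring]
      ring
    refine ⟨?_, hval⟩
    rw [hval, hK a b, ← htrdef]
    ring
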